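/- Let m ≥ 1 and x₁, …, x_m ∈ ℝⁿ with o not in the convex hull of {x₁, …, x_m}. Then the join (in the lattice PC^n) of the pseudo-cones [1,∞)·x₁, …, [1,∞)·x_m equals [1,∞)·conv{x₁, …, x_m}; in particular, the set [1,∞)·conv{x₁, …, x_m} is closed. -/

import Mathlib

open Set MeasureTheory
open scoped Classical
open scoped RealInnerProductSpace

noncomputable section

abbrev Euc (n : ℕ) := EuclideanSpace ℝ (Fin n)

/-- A (convex) pseudo-cone: nonempty convex set not containing the origin,
closed under multiplication by scalars `≥ 1`. -/
def IsPseudoCone {n : ℕ} (K : Set (Euc n)) : Prop :=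
  K.Nonempty ∧ Convex ℝ K ∧ (0 : Euc n) ∉ K ∧
    ∀ x ∈ K, ∀ l : ℝ, 1 ≤ l → l • x ∈ K

/-- A closed pseudo-cone. -/
def IsClosedPseudoCone {n : ℕ} (K : Set (Euc n)) : Prop :=
  IsClosed K ∧ IsPseudoCone K

/-- The duality `K* = {x : ⟪x,y⟫ ≤ -1 for all y ∈ K}`. -/
def pcDual {n : ℕ} (K : Set (Euc n)) : Set (Euc n) :=
  {x | ∀ y ∈ K, ⟪x, y⟫ ≤ (-1 : ℝ)}

/-- The recession cone `rec K = {x : K + x ⊆ K}`. -/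
def recCone {n : ℕ} (K : Set (Euc n)) : Set (Euc n) :=
  {x | ∀ y ∈ K, y + x ∈ K}

/-- `ℝ₊ K = {λ • x : λ ≥ 0, x ∈ K}`. -/
def posHull {n : ℕ} (K : Set (Euc n)) : Set (Euc n) :=
  {x | ∃ l : ℝ, 0 ≤ l ∧ ∃ y ∈ K, x = l • y}

/-- The polar cone `C° = {x : ⟪x,y⟫ ≤ 0 for all y ∈ C}`. -/
def polarCone {n : ℕ} (C : Set (Euc n)) : Set (Euc n) :=
  {x | ∀ y ∈ C, ⟪x, y⟫ ≤ (0 : ℝ)}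

/-- Membership in the class `PC^n`: closed pseudo-cones together with `∅` and `ℝⁿ`. -/
def MemPC {n : ℕ} (K : Set (Euc n)) : Prop :=
  IsClosedPseudoCone K ∨ K = ∅ ∨ K = Set.univ

/-- The join in `PC^n`. -/
def pcJoin {n : ℕ} (K L : Set (Euc n)) : Set (Euc n) :=
  if (0 : Euc n) ∈ closure (convexHull ℝ (K ∪ L)) then Set.univ
  else closure (convexHull ℝ (K ∪ L))

open scoped Pointwise

/-- If `o ∉ conv{x₁,…,x_m}` then the join of the pseudo-cones `x̄ᵢ = [1,∞) xᵢ` equals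
`[1,∞) conv{x₁,…,x_m}`; in particular the latter set is closed. -/
theorem join_rays_eq {n m : ℕ} (hm : 1 ≤ m) (x : Fin m → Euc n)
    (h0 : (0 : Euc n) ∉ convexHull ℝ (Set.range x)) :
    closure (convexHull ℝ (⋃ i, {z | ∃ l : ℝ, 1 ≤ l ∧ z = l • x i}))
        = {z | ∃ l : ℝ, 1 ≤ l ∧ ∃ y ∈ convexHull ℝ (Set.range x), z = l • y} ∧
      IsClosed {z | ∃ l : ℝ, 1 ≤ l ∧ ∃ y ∈ convexHull ℝ (Set.range x), z = l • y} := by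

  set C := convexHull ℝ (Set.range x) with hCdef
  have hCcpt : IsCompact C := (Set.finite_range x).isCompact_convexHull (𝕜 := ℝ)
  have hCconv : Convex ℝ C := convex_convexHull ℝ _
  have hCne : C.Nonempty :=
    ⟨x ⟨0, hm⟩, subset_convexHull ℝ _ (Set.mem_range_self _)⟩
  obtain ⟨y₀, hy₀C, hy₀min⟩ := hCcpt.exists_isMinOn hCne continuous_norm.continuousOn
  have hδ : 0 < ‖y₀‖ := by
    rw [norm_pos_iff]
    intro h
    exact h0 (h ▸ hy₀C)
  set S := {z : Euc n | ∃ l : ℝ, 1 ≤ l ∧ ∃ y ∈ C, z = l • y} with hSdef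
  have hSconv : Convex ℝ S := by
    rintro z₁ ⟨l₁, hl₁, y₁, hy₁, rfl⟩ z₂ ⟨l₂, hl₂, y₂, hy₂, rfl⟩ a b ha hb hab
    set l := a * l₁ + b * l₂ with hl
    have hl1 : 1 ≤ l := by
      calc (1:ℝ) = a * 1 + b * 1 := by rw [mul_one, mul_one, hab]
        _ ≤ l := add_le_add (mul_le_mul_of_nonneg_left hl₁ ha)
            (mul_le_mul_of_nonneg_left hl₂ hb)
    have hlpos : 0 < l := lt_of_lt_of_le one_pos hl1
    refine ⟨l, hl1, (a * l₁ / l) • y₁ + (b * l₂ / l) • y₂, ?_, ?_⟩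
    · apply hCconv hy₁ hy₂
      · positivity
      · positivity
      · field_simp
        exact hl.symm
    · rw [smul_add, smul_smul, smul_smul, smul_smul, smul_smul]
      congr 1 <;> congr 1 <;> field_simp
  have hSclosed : IsClosed S := by
    apply IsSeqClosed.isClosed
    intro u z hu huz
    choose l hl y hy hz using hu
    obtain ⟨B, hB⟩ : ∃ B, ∀ k, ‖u k‖ ≤ B := by
      obtain ⟨B, hB⟩ := huz.norm.bddAbove_range
      exact ⟨B, fun k => hB ⟨k, rfl⟩⟩
    have hlB : ∀ k, l k ≤ B / ‖y₀‖ := by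
      intro k
      rw [le_div_iff₀ hδ]
      calc l k * ‖y₀‖ ≤ l k * ‖y k‖ :=
            mul_le_mul_of_nonneg_left (hy₀min (hy k)) (le_trans zero_le_one (hl k))
        _ = ‖u k‖ := by
            rw [hz k, norm_smul, Real.norm_eq_abs, abs_of_nonneg (le_trans zero_le_one (hl k))]
        _ ≤ B := hB k
    have hKcpt : IsCompact ((Set.Icc (1:ℝ) (B / ‖y₀‖)) ×ˢ C) :=
      isCompact_Icc.prod hCcpt
    have hmem : ∀ k, (l k, y k) ∈ (Set.Icc (1:ℝ) (B / ‖y₀‖)) ×ˢ C :=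
      fun k => ⟨⟨hl k, hlB k⟩, hy k⟩
    obtain ⟨p, hpK, φ, hφmono, hφtend⟩ := hKcpt.tendsto_subseq hmem
    have h1 : Filter.Tendsto (fun k => l (φ k)) Filter.atTop (nhds p.1) :=
      (continuous_fst.tendsto p).comp hφtend
    have h2 : Filter.Tendsto (fun k => y (φ k)) Filter.atTop (nhds p.2) :=
      (continuous_snd.tendsto p).comp hφtend
    have h3 : Filter.Tendsto (fun k => u (φ k)) Filter.atTop (nhds (p.1 • p.2)) := by
      simpa only [← hz] using h1.smul h2
    have h4 : Filter.Tendsto (fun k => u (φ k)) Filter.atTop (nhds z) :=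
      huz.comp (hφmono.tendsto_atTop)
    have hz' : z = p.1 • p.2 := tendsto_nhds_unique h4 h3
    exact ⟨p.1, hpK.1.1, p.2, hpK.2, hz'⟩
  have hsub : (⋃ i, {z : Euc n | ∃ l : ℝ, 1 ≤ l ∧ z = l • x i}) ⊆ S := by
    rintro z hz
    simp only [Set.mem_iUnion, Set.mem_setOf_eq] at hz
    obtain ⟨i, l, hl, rfl⟩ := hz
    exact ⟨l, hl, x i, subset_convexHull ℝ _ (Set.mem_range_self _), rfl⟩
  have hsub2 : S ⊆ convexHull ℝ (⋃ i, {z : Euc n | ∃ l : ℝ, 1 ≤ l ∧ z = l • x i}) := by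
    rintro z ⟨l, hl, y, hy, rfl⟩
    have h1 : l • y ∈ l • C := Set.smul_mem_smul_set hy
    rw [hCdef, ← convexHull_smul] at h1
    refine convexHull_mono ?_ h1
    rintro w ⟨v, ⟨i, rfl⟩, rfl⟩
    exact Set.mem_iUnion.mpr ⟨i, l, hl, rfl⟩
  refine ⟨?_, hSclosed⟩
  apply subset_antisymm
  · rw [← hSclosed.closure_eq]
    exact closure_mono (convexHull_min hsub hSconv)
  · exact hsub2.trans subset_closure
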